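/- Exact invariant of the geometric loop: let p : ℝ≥0∞ with h : p ≤ 1, take state space Σ = ℕ × ℕ (values of the variables x and n), guard G (x, n) := (x = 0), loop body body (x, n) := (PMF.bernoulli p h).map (fun b => (if b then 1 else 0, n + 1)), and post-expectation E (x, n) := (n : ℝ≥0∞). Then the expectation I defined by I (x, n) := if x = 0 then (n : ℝ≥0∞) + 1 / p else (n : ℝ≥0∞) is a fixed point of the characteristic function: Φ_E I = I. Moreover, if 0 < p then I = lfp Φ_E, i.e., I is the weakest pre-expectation of the geometric loop with respect to the post-expectation n. -/

import Mathlib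

open ENNReal

/-- The characteristic function of the loop `while G do body` with respect to
post-expectation `E`. -/
noncomputable def Phi {S : Type*} (G : S → Prop) [DecidablePred G] (body : S → PMF S)
    (E : S → ℝ≥0∞) (X : S → ℝ≥0∞) : S → ℝ≥0∞ :=
  fun σ => if G σ then ∑' τ, body σ τ * X τ else E σ

theorem Phi_monotone {S : Type*} (G : S → Prop) [DecidablePred G] (body : S → PMF S)
    (E : S → ℝ≥0∞) : Monotone (Phi G body E) := by
  intro X Y hXY σ
  simp only [Phi]
  split
  · exact ENNReal.tsum_le_tsum fun τ => mul_le_mul' le_rfl (hXY τ)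
  · exact le_rfl

/-- The characteristic function, bundled as a monotone map on the complete
lattice of expectations. -/
noncomputable def PhiHom {S : Type*} (G : S → Prop) [DecidablePred G] (body : S → PMF S)
    (E : S → ℝ≥0∞) : (S → ℝ≥0∞) →o (S → ℝ≥0∞) :=
  ⟨Phi G body E, Phi_monotone G body E⟩

/-- The stopped `n`-step kernels of the loop `while G do body`. -/
noncomputable def mu {S : Type*} (G : S → Prop) [DecidablePred G] [DecidableEq S]
    (body : S → PMF S) : ℕ → S → S → ℝ≥0∞
  | 0 => fun σ τ => if ¬ G σ ∧ τ = σ then 1 else 0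
  | n + 1 => fun σ =>
      if G σ then (fun τ => ∑' σ', body σ σ' * mu G body n σ' τ) else mu G body 0 σ

/-- The loop's output sub-distribution. -/
noncomputable def W {S : Type*} (G : S → Prop) [DecidablePred G] [DecidableEq S]
    (body : S → PMF S) (σ τ : S) : ℝ≥0∞ :=
  ⨆ n, mu G body n σ τ

/-- Guard of the geometric loop: loop while x = 0. -/
def geoG : ℕ × ℕ → Prop := fun s => s.1 = 0

instance : DecidablePred geoG := fun s => inferInstanceAs (Decidable (s.1 = 0))

/-- Body of the geometric loop: increment n, then flip x with a p-biased coin. -/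
noncomputable def geoBody (p : ℝ≥0∞) (h : p ≤ 1) : ℕ × ℕ → PMF (ℕ × ℕ) :=
  fun s => (PMF.ofFintype (fun b => cond b p (1 - p)) (by simp [h, add_tsub_cancel_of_le h])).map (fun b => (if b then 1 else 0, s.2 + 1))

/-- Post-expectation: the value of n. -/
noncomputable def geoE : ℕ × ℕ → ℝ≥0∞ := fun s => (s.2 : ℝ≥0∞)

/-- Candidate invariant: [x = 0]·(n + 1/p) + [x ≠ 0]·n. -/
noncomputable def geoI (p : ℝ≥0∞) : ℕ × ℕ → ℝ≥0∞ :=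
  fun s => if s.1 = 0 then (s.2 : ℝ≥0∞) + 1 / p else (s.2 : ℝ≥0∞)

/- ### Auxiliary lemmas -/

lemma tsum_pmf_map {α β : Type*} (μ : PMF α) (f : α → β) (X : β → ℝ≥0∞) :
    ∑' b, (μ.map f) b * X b = ∑' a, μ a * X (f a) := by
  classical
  simp only [PMF.map_apply]
  rw [show (fun b => (∑' a, if b = f a then μ a else 0) * X b)
      = fun b => ∑' a, (if b = f a then μ a * X b else 0) from ?_]
  · rw [ENNReal.tsum_comm]
    refine tsum_congr fun a => ?_
    rw [show (fun b => if b = f a then μ a * X b else 0)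
        = fun b => if b = f a then μ a * X (f a) else 0 from ?_]
    · exact tsum_ite_eq (f a) (fun _ => μ a * X (f a))
    · funext b; split <;> simp_all
  · funext b
    rw [← ENNReal.tsum_mul_right]
    refine tsum_congr fun a => ?_; split <;> simp

lemma geoBody_tsum (p : ℝ≥0∞) (h : p ≤ 1) (s : ℕ × ℕ) (X : ℕ × ℕ → ℝ≥0∞) :
    ∑' τ, geoBody p h s τ * X τ = p * X (1, s.2 + 1) + (1 - p) * X (0, s.2 + 1) := by
  rw [geoBody, tsum_pmf_map, tsum_bool]
  simp [PMF.ofFintype_apply, add_comm]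

lemma geo_step (p : ℝ≥0∞) (h : p ≤ 1) (n : ℕ) :
    p * ((n : ℝ≥0∞) + 1) + (1 - p) * (((n : ℝ≥0∞) + 1) + 1 / p)
      = (n : ℝ≥0∞) + 1 / p := by
  rcases eq_or_ne p 0 with rfl | hp0
  · simp
  · have hpt : p ≠ ∞ := ne_top_of_le_ne_top one_ne_top h
    have hq : p + (1 - p) = 1 := by rw [add_comm]; exact tsub_add_cancel_of_le h
    have hpp : p / p = 1 := ENNReal.div_self hp0 hpt
    calc p * ((n : ℝ≥0∞) + 1) + (1 - p) * (((n : ℝ≥0∞) + 1) + 1 / p)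
        = (p + (1 - p)) * ((n : ℝ≥0∞) + 1) + (1 - p) * (1 / p) := by ring
      _ = ((n : ℝ≥0∞) + 1) + (1 - p) / p := by
          rw [hq, one_mul, one_div, ← div_eq_mul_inv]
      _ = (n : ℝ≥0∞) + (p / p + (1 - p) / p) := by
          rw [hpp, add_assoc]
      _ = (n : ℝ≥0∞) + 1 / p := by rw [ENNReal.div_add_div_same, hq]

lemma geo_fixed (p : ℝ≥0∞) (h : p ≤ 1) :
    Phi geoG (geoBody p h) geoE (geoI p) = geoI p := by
  funext s
  obtain ⟨x, n⟩ := s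
  by_cases hx : x = 0
  · subst hx
    simp only [Phi, geoG, if_pos rfl]
    rw [geoBody_tsum]
    simp only [geoI, if_pos rfl, one_ne_zero, if_neg]
    push_cast
    exact geo_step p h n
  · simp [Phi, geoG, geoI, geoE, hx]

private def finSigmaEquiv : (Σ n : ℕ, Fin (n + 1)) ≃ ℕ × ℕ where
  toFun y := (y.2.1, y.1 - y.2.1)
  invFun x := ⟨x.1 + x.2, ⟨x.1, by omega⟩⟩
  left_inv := by
    rintro ⟨n, ⟨k, hk⟩⟩
    dsimp only
    exact Sigma.ext (by dsimp; omega) ((Fin.heq_ext_iff (by dsimp; omega)).2 rfl)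
  right_inv := by rintro ⟨i, j⟩; simp

lemma tsum_add_one_mul_geometric (q : ℝ≥0∞) :
    ∑' n : ℕ, ((n : ℝ≥0∞) + 1) * q ^ n = (1 - q)⁻¹ * (1 - q)⁻¹ := by
  have h1 : (∑' x : ℕ × ℕ, q ^ (x.1 + x.2)) = (1 - q)⁻¹ * (1 - q)⁻¹ := by
    rw [ENNReal.tsum_prod']
    simp only [pow_add, ENNReal.tsum_mul_left, ENNReal.tsum_geometric,
      ENNReal.tsum_mul_right]
  rw [← h1, ← finSigmaEquiv.tsum_eq fun x : ℕ × ℕ => q ^ (x.1 + x.2)]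
  have h2 : ∀ y : Σ n : ℕ, Fin (n + 1),
      q ^ ((finSigmaEquiv y).1 + (finSigmaEquiv y).2) = q ^ y.1 := by
    rintro ⟨n, ⟨k, hk⟩⟩
    simp only [finSigmaEquiv]
    congr 1
    simp; omega
  rw [tsum_congr h2, ENNReal.tsum_sigma']
  refine tsum_congr fun n => ?_
  rw [tsum_fintype]
  simp [Finset.sum_const, mul_comm, add_comm]

lemma geo_tsum_val (p : ℝ≥0∞) (hp0 : p ≠ 0) (h : p ≤ 1) (n : ℕ) :
    ∑' i : ℕ, (1 - p) ^ i * (p * ((n + i + 1 : ℕ) : ℝ≥0∞)) = (n : ℝ≥0∞) + 1 / p := by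
  have hpt : p ≠ ∞ := ne_top_of_le_ne_top one_ne_top h
  have hq : 1 - (1 - p) = p := ENNReal.sub_sub_cancel one_ne_top h
  have hc : ∀ i : ℕ, (1 - p) ^ i * (p * ((n + i + 1 : ℕ) : ℝ≥0∞))
      = p * (n : ℝ≥0∞) * (1 - p) ^ i + p * (((i : ℝ≥0∞) + 1) * (1 - p) ^ i) := by
    intro i; push_cast; ring
  rw [tsum_congr hc, ENNReal.tsum_add, ENNReal.tsum_mul_left, ENNReal.tsum_mul_left,
    ENNReal.tsum_geometric, tsum_add_one_mul_geometric, hq]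
  have hinv : p * p⁻¹ = 1 := ENNReal.mul_inv_cancel hp0 hpt
  rw [mul_right_comm, hinv, one_mul, ← mul_assoc, hinv, one_mul, one_div]

/-- the expectation geoI is an exact invariant of the geometric
loop with respect to post-expectation n, and if 0 < p it is the weakest
pre-expectation. -/
theorem geo_invariant (p : ℝ≥0∞) (h : p ≤ 1) :
    Phi geoG (geoBody p h) geoE (geoI p) = geoI p ∧
    (0 < p → geoI p = OrderHom.lfp (PhiHom geoG (geoBody p h) geoE)) := by
  refine ⟨geo_fixed p h, fun hp => ?_⟩
  set L : (ℕ × ℕ) → ℝ≥0∞ := OrderHom.lfp (PhiHom geoG (geoBody p h) geoE) with hLdef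
  have hle : L ≤ geoI p := OrderHom.lfp_le _ (le_of_eq (geo_fixed p h))
  have hfix : ∀ σ, Phi geoG (geoBody p h) geoE L σ = L σ := fun σ =>
    congrFun (OrderHom.map_lfp (PhiHom geoG (geoBody p h) geoE)) σ
  have hL1 : ∀ x m : ℕ, x ≠ 0 → L (x, m) = (m : ℝ≥0∞) := by
    intro x m hx
    rw [← hfix (x, m)]
    simp [Phi, geoG, geoE, hx]
  have hrec : ∀ m : ℕ, L (0, m) = p * ((m : ℝ≥0∞) + 1) + (1 - p) * L (0, m + 1) := by
    intro m
    rw [← hfix (0, m)]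
    simp only [Phi, geoG, if_pos rfl]
    rw [geoBody_tsum, hL1 1 (m + 1) one_ne_zero]
    push_cast
    rfl
  have hlow : ∀ k m : ℕ,
      ∑ i ∈ Finset.range k, (1 - p) ^ i * (p * ((m + i + 1 : ℕ) : ℝ≥0∞)) ≤ L (0, m) := by
    intro k
    induction k with
    | zero => simp
    | succ k ih =>
      intro m
      rw [Finset.sum_range_succ']
      have hsh : ∀ i : ℕ, (1 - p) ^ (i + 1) * (p * ((m + (i + 1) + 1 : ℕ) : ℝ≥0∞))
          = (1 - p) * ((1 - p) ^ i * (p * (((m + 1) + i + 1 : ℕ) : ℝ≥0∞))) := by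
        intro i
        rw [show m + (i + 1) + 1 = (m + 1) + i + 1 by omega, pow_succ]
        ring
      calc (∑ i ∈ Finset.range k, (1 - p) ^ (i + 1) * (p * ((m + (i + 1) + 1 : ℕ) : ℝ≥0∞)))
            + (1 - p) ^ 0 * (p * ((m + 0 + 1 : ℕ) : ℝ≥0∞))
          = (1 - p) * (∑ i ∈ Finset.range k,
              (1 - p) ^ i * (p * (((m + 1) + i + 1 : ℕ) : ℝ≥0∞)))
            + p * (((m : ℝ≥0∞)) + 1) := by
            rw [Finset.sum_congr rfl fun i _ => hsh i, ← Finset.mul_sum]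
            push_cast
            ring
        _ ≤ (1 - p) * L (0, m + 1) + p * ((m : ℝ≥0∞) + 1) :=
            add_le_add_left (mul_le_mul_right (ih (m + 1)) _) _
        _ = L (0, m) := by rw [add_comm, ← hrec m]
  refine le_antisymm (fun s => ?_) hle
  obtain ⟨x, n⟩ := s
  by_cases hx : x = 0
  · subst hx
    show geoI p (0, n) ≤ L (0, n)
    rw [geoI]
    simp only [if_pos rfl]
    rw [← geo_tsum_val p hp.ne' h n, ENNReal.tsum_eq_iSup_nat]
    exact iSup_le fun k => hlow k n
  · show geoI p (x, n) ≤ L (x, n)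
    rw [geoI, hL1 x n hx]
    simp [hx]
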